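/- Let n be a natural number, θ ∈ ℂ, and let q, p : ℝ → Matrix (Fin n) (Fin n) ℂ be differentiable functions satisfying, for all t, q'(t) = p(t) and p'(t) = 2·(q t)³ + t·(q t) + θ·1. Then the matrix commutator [p(t), q(t)] = p(t)·q(t) − q(t)·p(t) is constant in t (its derivative is the zero matrix for every t). -/

import Mathlib

/-- Along the matrix Painlevé II flow `q' = p`, `p' = 2q³ + tq + θ·1`, the commutator
`[p, q] = pq − qp` (the moment map of the adjoint `GL(n)`-action) is conserved:
its entrywise time derivative vanishes. -/
theorem matrix_painleveII_moment_map_conserved (n : ℕ) (θ : ℂ)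
    (q p : ℝ → Matrix (Fin n) (Fin n) ℂ)
    (hq : ∀ (t : ℝ) (i j : Fin n), HasDerivAt (fun s => q s i j) (p t i j) t)
    (hp : ∀ (t : ℝ) (i j : Fin n),
      HasDerivAt (fun s => p s i j)
        (((2 : ℂ) • (q t) ^ 3 + (t : ℂ) • q t
          + θ • (1 : Matrix (Fin n) (Fin n) ℂ)) i j) t) :
    ∀ (t : ℝ) (i j : Fin n),
      HasDerivAt (fun s => (p s * q s - q s * p s) i j) 0 t := by
  intro t i j
  set A : Matrix (Fin n) (Fin n) ℂ :=
    (2 : ℂ) • (q t) ^ 3 + (t : ℂ) • q t + θ • (1 : Matrix (Fin n) (Fin n) ℂ) with hA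
  have hcomm : A * q t = q t * A := by
    rw [hA]
    simp only [add_mul, mul_add, Matrix.smul_mul, Matrix.mul_smul, one_mul, mul_one,
      ← pow_succ, ← pow_succ']
  have h1 : HasDerivAt (fun s => ∑ k, p s i k * q s k j)
      (∑ k, (A i k * q t k j + p t i k * p t k j)) t :=
    HasDerivAt.fun_sum fun k _ => (hp t i k).mul (hq t k j)
  have h2 : HasDerivAt (fun s => ∑ k, q s i k * p s k j)
      (∑ k, (p t i k * p t k j + q t i k * A k j)) t :=
    HasDerivAt.fun_sum fun k _ => (hq t i k).mul (hp t k j)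
  have h3 := h1.fun_sub h2
  have hval : (∑ k, (A i k * q t k j + p t i k * p t k j))
      - (∑ k, (p t i k * p t k j + q t i k * A k j)) = 0 := by
    have : (A * q t) i j = (q t * A) i j := by rw [hcomm]
    simp only [Matrix.mul_apply] at this
    simp [Finset.sum_add_distrib, this]
    ring
  rw [hval] at h3
  simpa [Matrix.sub_apply, Matrix.mul_apply] using h3
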